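/- Let K be a field, R = K[[x_1,…,x_s]], A, B ∈ M_{m,n}, and suppose B = U·φ(A)·V for some U ∈ GL(m,R), V ∈ GL(n,R), and K-algebra automorphism φ of R. Then the extended tangent images satisfy T̃^e_B(G_lr B) = U·φ(T̃^e_A(G_lr A))·V, i.e. T̃^e_B(G_lr B) is the image of T̃^e_A(G_lr A) under the map X ↦ U·φ(X)·V. The same equality holds for the (non-extended) tangent images T̃_B(G_lr B) = U·φ(T̃_A(G_lr A))·V. -/

import Mathlib

/- STATEMENT 7: If B = U·φ(A)·V with U ∈ GL(m,R), V ∈ GL(n,R) and φ a K-algebra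
automorphism of R = K[[x_1,…,x_s]], then T̃^e_B(G_lr B) = U·φ(T̃^e_A(G_lr A))·V and
T̃_B(G_lr B) = U·φ(T̃_A(G_lr A))·V, where the right-hand sides are the images of the
tangent images of A under the map X ↦ U·φ(X)·V. -/

open MvPowerSeries IsLocalRing

noncomputable section

/-- The formal partial derivative ∂f/∂x_ν of a formal power series. -/
def pderiv {K : Type*} [Field K] {s : ℕ} (ν : Fin s) (f : MvPowerSeries (Fin s) K) :
    MvPowerSeries (Fin s) K :=
  fun e => ((e ν + 1 : ℕ) : K) * MvPowerSeries.coeff (R := K) (e + Finsupp.single ν 1) f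

/-- The tangent image T̃_A(G_lr A) = ⟨E_{m,pq}·A⟩ + ⟨A·E_{n,hl}⟩ + m·⟨∂A/∂x_ν⟩. -/
def Tlr {K : Type*} [Field K] {s m n : ℕ} (A : Matrix (Fin m) (Fin n) (MvPowerSeries (Fin s) K)) :
    Submodule (MvPowerSeries (Fin s) K) (Matrix (Fin m) (Fin n) (MvPowerSeries (Fin s) K)) :=
  Submodule.span _
      ((Set.range fun pq : Fin m × Fin m =>
          Matrix.single pq.1 pq.2 (1 : MvPowerSeries (Fin s) K) * A)
        ∪ (Set.range fun hl : Fin n × Fin n =>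
          A * Matrix.single hl.1 hl.2 (1 : MvPowerSeries (Fin s) K)))
    ⊔ (maximalIdeal (MvPowerSeries (Fin s) K)) •
        Submodule.span _ (Set.range fun ν : Fin s => A.map (pderiv ν))

/-- The extended tangent image T̃^e_A(G_lr A) = ⟨E_{m,pq}·A⟩ + ⟨A·E_{n,hl}⟩ + ⟨∂A/∂x_ν⟩. -/
def Tlre {K : Type*} [Field K] {s m n : ℕ}
    (A : Matrix (Fin m) (Fin n) (MvPowerSeries (Fin s) K)) :
    Submodule (MvPowerSeries (Fin s) K) (Matrix (Fin m) (Fin n) (MvPowerSeries (Fin s) K)) :=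
  Submodule.span _
      ((Set.range fun pq : Fin m × Fin m =>
          Matrix.single pq.1 pq.2 (1 : MvPowerSeries (Fin s) K) * A)
        ∪ (Set.range fun hl : Fin n × Fin n =>
          A * Matrix.single hl.1 hl.2 (1 : MvPowerSeries (Fin s) K)))
    ⊔ Submodule.span _ (Set.range fun ν : Fin s => A.map (pderiv ν))

namespace TangentAux

variable {K : Type*} [Field K] {s : ℕ}

local notation "R" => MvPowerSeries (Fin s) K

lemma coeff_pderiv (ν : Fin s) (f : R) (e : Fin s →₀ ℕ) :
    @MvPowerSeries.coeff (Fin s) K _ e (pderiv ν f) =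
      ((e ν + 1 : ℕ) : K) * @MvPowerSeries.coeff (Fin s) K _ (e + Finsupp.single ν 1) f := rfl

lemma pderiv_add (ν : Fin s) (f g : R) :
    pderiv ν (f + g) = pderiv ν f + pderiv ν g := by
  ext e
  simp [coeff_pderiv, map_add, mul_add]

lemma pderiv_zero (ν : Fin s) : pderiv ν (0 : R) = 0 := by
  ext e; simp [coeff_pderiv]

/-- `pderiv` as an `AddMonoidHom`. -/
def pderivHom (ν : Fin s) : R →+ R where
  toFun := pderiv ν
  map_zero' := pderiv_zero ν
  map_add' := pderiv_add ν

lemma pderiv_C (ν : Fin s) (c : K) : pderiv ν (@MvPowerSeries.C (Fin s) K _ c) = 0 := by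
  ext e
  rw [coeff_pderiv, MvPowerSeries.coeff_C, if_neg, mul_zero, map_zero]
  intro h
  have := DFunLike.congr_fun h ν
  simp at this

lemma pderiv_one (ν : Fin s) : pderiv ν (1 : R) = 0 := by
  simpa using pderiv_C ν (1 : K)

lemma pderiv_X (ν μ : Fin s) :
    pderiv ν (MvPowerSeries.X μ : R) = if μ = ν then 1 else 0 := by
  ext e
  rw [coeff_pderiv, MvPowerSeries.coeff_X]
  by_cases h : μ = ν
  · subst h
    rw [if_pos rfl, MvPowerSeries.coeff_one]
    by_cases he : e = 0
    · subst he; simp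
    · rw [if_neg he, if_neg, mul_zero]
      intro hh
      exact he (by simpa using add_right_cancel (hh.trans (zero_add _).symm))
  · rw [if_neg h, map_zero, if_neg, mul_zero]
    intro hh
    have := DFunLike.congr_fun hh ν
    simp [Finsupp.single_apply, h, (Ne.symm h)] at this


open Finsupp in
lemma sum_shift_left (e : Fin s →₀ ℕ) (ν : Fin s) (F : (Fin s →₀ ℕ) → (Fin s →₀ ℕ) → K) :
    ∑ p ∈ Finset.HasAntidiagonal.antidiagonal (e + single ν 1), (((p.1 : Fin s →₀ ℕ) ν : ℕ) : K) * F p.1 p.2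
      = ∑ q ∈ Finset.HasAntidiagonal.antidiagonal e, (((q.1 : Fin s →₀ ℕ) ν + 1 : ℕ) : K) * F (q.1 + single ν 1) q.2 := by
  classical
  rw [← Finset.sum_filter_of_ne
    (p := fun p : (Fin s →₀ ℕ) × (Fin s →₀ ℕ) => p.1 ν ≠ 0)
    (by
      intro p _ hne h0
      apply hne
      rw [h0]
      simp)]
  refine Finset.sum_nbij' (fun p => (p.1 - single ν 1, p.2)) (fun q => (q.1 + single ν 1, q.2))
    ?_ ?_ ?_ ?_ ?_
  · intro p hp
    simp only [Finset.mem_filter, Finset.HasAntidiagonal.mem_antidiagonal] at hp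
    obtain ⟨hp1, hp2⟩ := hp
    have hle : single ν 1 ≤ p.1 := Finsupp.single_le_iff.2 (Nat.one_le_iff_ne_zero.2 hp2)
    rw [Finset.HasAntidiagonal.mem_antidiagonal]
    have : p.1 - single ν 1 + p.2 + single ν 1 = e + single ν 1 := by
      rw [add_right_comm, tsub_add_cancel_of_le hle, hp1]
    exact add_right_cancel this
  · intro q hq
    rw [Finset.HasAntidiagonal.mem_antidiagonal] at hq
    simp only [Finset.mem_filter, Finset.HasAntidiagonal.mem_antidiagonal]
    constructor
    · rw [← hq]; abel
    · simp [Finsupp.add_apply]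
  · intro p hp
    simp only [Finset.mem_filter, Finset.HasAntidiagonal.mem_antidiagonal] at hp
    have hle : single ν 1 ≤ p.1 := Finsupp.single_le_iff.2 (Nat.one_le_iff_ne_zero.2 hp.2)
    simp [tsub_add_cancel_of_le hle]
  · intro q _
    simp
  · intro p hp
    simp only [Finset.mem_filter, Finset.HasAntidiagonal.mem_antidiagonal] at hp
    have hle : single ν 1 ≤ p.1 := Finsupp.single_le_iff.2 (Nat.one_le_iff_ne_zero.2 hp.2)
    rw [tsub_add_cancel_of_le hle]
    congr 2
    rw [Finsupp.tsub_apply, Finsupp.single_apply, if_pos rfl]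
    omega

open Finsupp in
lemma sum_shift_right (e : Fin s →₀ ℕ) (ν : Fin s) (F : (Fin s →₀ ℕ) → (Fin s →₀ ℕ) → K) :
    ∑ p ∈ Finset.HasAntidiagonal.antidiagonal (e + single ν 1), (((p.2 : Fin s →₀ ℕ) ν : ℕ) : K) * F p.1 p.2
      = ∑ q ∈ Finset.HasAntidiagonal.antidiagonal e, (((q.2 : Fin s →₀ ℕ) ν + 1 : ℕ) : K) * F q.1 (q.2 + single ν 1) := by
  classical
  rw [← Finset.sum_filter_of_ne
    (p := fun p : (Fin s →₀ ℕ) × (Fin s →₀ ℕ) => p.2 ν ≠ 0)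
    (by
      intro p _ hne h0
      apply hne
      rw [h0]
      simp)]
  refine Finset.sum_nbij' (fun p => (p.1, p.2 - single ν 1)) (fun q => (q.1, q.2 + single ν 1))
    ?_ ?_ ?_ ?_ ?_
  · intro p hp
    simp only [Finset.mem_filter, Finset.HasAntidiagonal.mem_antidiagonal] at hp
    obtain ⟨hp1, hp2⟩ := hp
    have hle : single ν 1 ≤ p.2 := Finsupp.single_le_iff.2 (Nat.one_le_iff_ne_zero.2 hp2)
    rw [Finset.HasAntidiagonal.mem_antidiagonal]
    have : p.1 + (p.2 - single ν 1) + single ν 1 = e + single ν 1 := by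
      rw [add_assoc, tsub_add_cancel_of_le hle, hp1]
    exact add_right_cancel this
  · intro q hq
    rw [Finset.HasAntidiagonal.mem_antidiagonal] at hq
    simp only [Finset.mem_filter, Finset.HasAntidiagonal.mem_antidiagonal]
    constructor
    · rw [← hq]; abel
    · simp [Finsupp.add_apply]
  · intro p hp
    simp only [Finset.mem_filter, Finset.HasAntidiagonal.mem_antidiagonal] at hp
    have hle : single ν 1 ≤ p.2 := Finsupp.single_le_iff.2 (Nat.one_le_iff_ne_zero.2 hp.2)
    simp [tsub_add_cancel_of_le hle]
  · intro q _
    simp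
  · intro p hp
    simp only [Finset.mem_filter, Finset.HasAntidiagonal.mem_antidiagonal] at hp
    have hle : single ν 1 ≤ p.2 := Finsupp.single_le_iff.2 (Nat.one_le_iff_ne_zero.2 hp.2)
    rw [tsub_add_cancel_of_le hle]
    congr 2
    rw [Finsupp.tsub_apply, Finsupp.single_apply, if_pos rfl]
    omega

lemma pderiv_mul (ν : Fin s) (f g : R) :
    pderiv ν (f * g) = pderiv ν f * g + f * pderiv ν g := by
  classical
  ext e
  rw [map_add, coeff_pderiv, MvPowerSeries.coeff_mul, MvPowerSeries.coeff_mul,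
    MvPowerSeries.coeff_mul, Finset.mul_sum]
  have key : ∀ p ∈ Finset.HasAntidiagonal.antidiagonal (e + Finsupp.single ν 1),
      ((e ν + 1 : ℕ) : K) * (@MvPowerSeries.coeff (Fin s) K _ p.1 f * @MvPowerSeries.coeff (Fin s) K _ p.2 g)
        = ((p.1 ν : ℕ) : K) * (@MvPowerSeries.coeff (Fin s) K _ p.1 f * @MvPowerSeries.coeff (Fin s) K _ p.2 g)
          + ((p.2 ν : ℕ) : K) * (@MvPowerSeries.coeff (Fin s) K _ p.1 f * @MvPowerSeries.coeff (Fin s) K _ p.2 g) := by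
    intro p hp
    rw [Finset.HasAntidiagonal.mem_antidiagonal] at hp
    have hν : p.1 ν + p.2 ν = e ν + 1 := by
      have := DFunLike.congr_fun hp ν
      simpa [Finsupp.add_apply, Finsupp.single_apply] using this
    rw [← add_mul, ← Nat.cast_add, hν]
  rw [Finset.sum_congr rfl key, Finset.sum_add_distrib,
    sum_shift_left e ν (fun a b => @MvPowerSeries.coeff (Fin s) K _ a f * @MvPowerSeries.coeff (Fin s) K _ b g),
    sum_shift_right e ν (fun a b => @MvPowerSeries.coeff (Fin s) K _ a f * @MvPowerSeries.coeff (Fin s) K _ b g)]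
  congr 1
  · apply Finset.sum_congr rfl
    intro q _
    rw [coeff_pderiv]
    ring
  · apply Finset.sum_congr rfl
    intro q _
    rw [coeff_pderiv]
    ring



lemma degree_add' (a b : Fin s →₀ ℕ) : (a + b).degree = a.degree + b.degree := by
  rw [Finsupp.degree_eq_weight_one]
  exact map_add _ a b

lemma degree_single' (ν : Fin s) : (Finsupp.single ν 1 : Fin s →₀ ℕ).degree = 1 := by
  exact Finsupp.degree_single ν 1

lemma mem_maximalIdeal_iff (f : R) :
    f ∈ maximalIdeal R ↔ @MvPowerSeries.constantCoeff (Fin s) K _ f = 0 := by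
  rw [IsLocalRing.mem_maximalIdeal, mem_nonunits_iff, MvPowerSeries.isUnit_iff_constantCoeff]
  simp [isUnit_iff_ne_zero]

lemma X_mem_maximalIdeal (ν : Fin s) : (MvPowerSeries.X ν : R) ∈ maximalIdeal R :=
  (mem_maximalIdeal_iff _).2 (MvPowerSeries.constantCoeff_X ν)

lemma coeff_eq_zero_of_mem_pow {nn : ℕ} {f : R} (hf : f ∈ maximalIdeal R ^ nn) :
    ∀ e : Fin s →₀ ℕ, e.degree < nn → @MvPowerSeries.coeff (Fin s) K _ e f = 0 := by
  classical
  induction nn generalizing f with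
  | zero => exact fun e h => absurd h (Nat.not_lt_zero _)
  | succ nn ih =>
    rw [pow_succ] at hf
    refine Submodule.mul_induction_on hf ?_ ?_
    · intro g hg h hh e hlt
      rw [MvPowerSeries.coeff_mul]
      apply Finset.sum_eq_zero
      intro p hp
      rw [Finset.HasAntidiagonal.mem_antidiagonal] at hp
      by_cases h1 : (p.1 : Fin s →₀ ℕ).degree < nn
      · rw [ih hg p.1 h1, zero_mul]
      · have hdeg : (p.1 : Fin s →₀ ℕ).degree + (p.2 : Fin s →₀ ℕ).degree = e.degree := by
          rw [← degree_add', hp]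
        have h2 : (p.2 : Fin s →₀ ℕ) = 0 := by
          rw [← Finsupp.degree_eq_zero_iff]
          omega
        rw [h2, MvPowerSeries.coeff_zero_eq_constantCoeff_apply,
          (mem_maximalIdeal_iff h).1 hh, mul_zero]
    · intro x y hx hy e hl
      rw [map_add, hx e hl, hy e hl, add_zero]

lemma mem_pow_of_coeff_eq_zero {nn : ℕ} {f : R}
    (h : ∀ e : Fin s →₀ ℕ, e.degree < nn → @MvPowerSeries.coeff (Fin s) K _ e f = 0) :
    f ∈ maximalIdeal R ^ nn := by
  classical
  induction nn generalizing f with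
  | zero => simp [pow_zero, Ideal.one_eq_top]
  | succ nn ih =>
    set g : Fin s → R := fun i =>
      (fun e => if ∀ j, j < i → e j = 0
        then @MvPowerSeries.coeff (Fin s) K _ (e + Finsupp.single i 1) f else 0 : R) with hgdef
    have coeff_g : ∀ (i : Fin s) (e : Fin s →₀ ℕ),
        @MvPowerSeries.coeff (Fin s) K _ e (g i) = if ∀ j, j < i → e j = 0
          then @MvPowerSeries.coeff (Fin s) K _ (e + Finsupp.single i 1) f else 0 := fun i e => rfl
    have hf : f = ∑ i : Fin s, MvPowerSeries.X i * g i := by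
      ext d
      rw [map_sum]
      by_cases hd : d = 0
      · subst hd
        rw [h 0 (by rw [map_zero]; omega)]
        symm
        apply Finset.sum_eq_zero
        intro i _
        rw [MvPowerSeries.X_def, MvPowerSeries.coeff_monomial_mul, if_neg]
        intro hle
        have := Finsupp.single_le_iff.1 hle
        simp at this
      · have hsupp : d.support.Nonempty := by rwa [Finsupp.support_nonempty_iff]
        set i₀ := d.support.min' hsupp with hi₀def
        have hi₀ : d i₀ ≠ 0 := Finsupp.mem_support_iff.1 (d.support.min'_mem hsupp)
        have hle₀ : Finsupp.single i₀ 1 ≤ d :=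
          Finsupp.single_le_iff.2 (Nat.one_le_iff_ne_zero.2 hi₀)
        have hmin : ∀ j, j < i₀ → d j = 0 := by
          intro j hj
          by_contra hne
          exact absurd (Finset.min'_le _ j (Finsupp.mem_support_iff.2 hne)) (not_le.2 hj)
        have hsum : (∑ i : Fin s, @MvPowerSeries.coeff (Fin s) K _ d (MvPowerSeries.X i * g i))
            = @MvPowerSeries.coeff (Fin s) K _ d (MvPowerSeries.X i₀ * g i₀) := by
          apply Finset.sum_eq_single
          · intro i _ hne
            rw [MvPowerSeries.X_def, MvPowerSeries.coeff_monomial_mul]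
            by_cases hle : Finsupp.single i 1 ≤ d
            · rw [if_pos hle, one_mul, coeff_g, if_neg]
              intro hcond
              rcases lt_or_gt_of_ne hne with hlt | hgt
              · have h1 := Finsupp.single_le_iff.1 hle
                have h2 := hmin i hlt
                omega
              · have h0 := hcond i₀ hgt
                rw [Finsupp.tsub_apply, Finsupp.single_apply,
                  if_neg (ne_of_gt hgt), Nat.sub_zero] at h0
                exact hi₀ h0
            · rw [if_neg hle]
          · intro hnm
            exact absurd (Finset.mem_univ i₀) hnm
        rw [hsum]
        have hcond : ∀ j, j < i₀ → (d - Finsupp.single i₀ 1 : Fin s →₀ ℕ) j = 0 := by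
          intro j hj
          rw [Finsupp.tsub_apply, Finsupp.single_apply,
            if_neg (fun hh => absurd hh.symm (ne_of_lt hj)), Nat.sub_zero]
          exact hmin j hj
        rw [MvPowerSeries.X_def, MvPowerSeries.coeff_monomial_mul, if_pos hle₀, one_mul,
          coeff_g, if_pos hcond, tsub_add_cancel_of_le hle₀]
    rw [hf]
    apply Submodule.sum_mem
    intro i _
    rw [pow_succ']
    apply Ideal.mul_mem_mul (X_mem_maximalIdeal i)
    apply ih
    intro e he
    rw [coeff_g]
    split
    · apply h
      rw [degree_add', degree_single']
      omega
    · rfl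

lemma eq_zero_of_forall_mem_pow {f : R} (h : ∀ nn : ℕ, f ∈ maximalIdeal R ^ nn) : f = 0 := by
  ext e
  rw [map_zero]
  exact coeff_eq_zero_of_mem_pow (h (e.degree + 1)) e (Nat.lt_succ_self _)


open Finsupp in
/-- Truncation of a power series below total degree `nn`. -/
def truncP (nn : ℕ) (f : R) : R :=
  ∑ e ∈ (Finset.Iic (equivFunOnFinite.symm fun _ : Fin s => nn)).filter
      (fun e : Fin s →₀ ℕ => e.degree < nn),
    @MvPowerSeries.monomial (Fin s) K _ e (@MvPowerSeries.coeff (Fin s) K _ e f)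

lemma coeff_truncP (nn : ℕ) (f : R) (d : Fin s →₀ ℕ) :
    @MvPowerSeries.coeff (Fin s) K _ d (truncP nn f)
      = if d.degree < nn then @MvPowerSeries.coeff (Fin s) K _ d f else 0 := by
  classical
  rw [truncP, map_sum]
  have : ∀ e ∈ (Finset.Iic (Finsupp.equivFunOnFinite.symm fun _ : Fin s => nn)).filter
      (fun e : Fin s →₀ ℕ => e.degree < nn),
      @MvPowerSeries.coeff (Fin s) K _ d (@MvPowerSeries.monomial (Fin s) K _ e (@MvPowerSeries.coeff (Fin s) K _ e f))
        = if e = d then @MvPowerSeries.coeff (Fin s) K _ e f else 0 := by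
    intro e _
    rw [MvPowerSeries.coeff_monomial]
    by_cases h : d = e
    · rw [if_pos h, if_pos h.symm]
    · rw [if_neg h, if_neg (fun hh => h hh.symm)]
  rw [Finset.sum_congr rfl this, Finset.sum_ite_eq']
  by_cases hlt : d.degree < nn
  · rw [if_pos, if_pos hlt]
    refine Finset.mem_filter.2 ⟨Finset.mem_Iic.2 ?_, hlt⟩
    rw [Finsupp.le_def]
    intro i
    simp only [Finsupp.equivFunOnFinite_symm_apply_apply]
    exact le_trans (Finsupp.le_degree i d) (le_of_lt hlt)
  · rw [if_neg, if_neg hlt]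
    intro hmem
    exact hlt (Finset.mem_filter.1 hmem).2

lemma sub_truncP_mem_pow (nn : ℕ) (f : R) :
    f - truncP nn f ∈ maximalIdeal R ^ nn := by
  apply mem_pow_of_coeff_eq_zero
  intro e he
  rw [map_sub, coeff_truncP, if_pos he, sub_self]

/-- A (not necessarily continuous-looking) K-linear derivation, axiomatized. -/
structure IsDeriv (D : R → R) : Prop where
  add : ∀ f g : R, D (f + g) = D f + D g
  mul : ∀ f g : R, D (f * g) = D f * g + f * D g
  Czero : ∀ c : K, D (@MvPowerSeries.C (Fin s) K _ c) = 0

namespace IsDeriv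

variable {D D₁ D₂ : MvPowerSeries (Fin s) K → MvPowerSeries (Fin s) K}

lemma zero (hD : IsDeriv D) : D 0 = 0 := by
  have := hD.Czero 0
  rwa [map_zero] at this

lemma one (hD : IsDeriv D) : D 1 = 0 := by
  have := hD.Czero 1
  rwa [map_one] at this

lemma sub (hD : IsDeriv D) (f g : R) : D (f - g) = D f - D g := by
  have h := hD.add (f - g) g
  rw [sub_add_cancel] at h
  rw [eq_sub_iff_add_eq]
  exact h.symm

lemma sum (hD : IsDeriv D) {ι : Type*} (t : Finset ι) (F : ι → R) :
    D (∑ i ∈ t, F i) = ∑ i ∈ t, D (F i) := by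
  classical
  induction t using Finset.induction with
  | empty => simpa using hD.zero
  | insert _ _ hx ih =>
    rw [Finset.sum_insert hx, Finset.sum_insert hx, hD.add, ih]

lemma mul_congr (h₁ : IsDeriv D₁) (h₂ : IsDeriv D₂) {u v : R}
    (hu : D₁ u = D₂ u) (hv : D₁ v = D₂ v) : D₁ (u * v) = D₂ (u * v) := by
  rw [h₁.mul, h₂.mul, hu, hv]

lemma pow_congr (h₁ : IsDeriv D₁) (h₂ : IsDeriv D₂) {u : R} (hu : D₁ u = D₂ u) (b : ℕ) :
    D₁ (u ^ b) = D₂ (u ^ b) := by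
  induction b with
  | zero => rw [pow_zero, h₁.one, h₂.one]
  | succ b ih => rw [pow_succ]; exact mul_congr h₁ h₂ ih hu

lemma congr_monomial (h₁ : IsDeriv D₁) (h₂ : IsDeriv D₂)
    (hX : ∀ μ : Fin s, D₁ (MvPowerSeries.X μ) = D₂ (MvPowerSeries.X μ))
    (e : Fin s →₀ ℕ) (c : K) :
    D₁ (@MvPowerSeries.monomial (Fin s) K _ e c) = D₂ (@MvPowerSeries.monomial (Fin s) K _ e c) := by
  induction e using Finsupp.induction with
  | zero =>
    rw [MvPowerSeries.monomial_zero_eq_C_apply, h₁.Czero, h₂.Czero]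
  | single_add a b e ha hb ih =>
    have hsplit : @MvPowerSeries.monomial (Fin s) K _ (Finsupp.single a b + e) c
        = (MvPowerSeries.X a : R) ^ b * @MvPowerSeries.monomial (Fin s) K _ e c := by
      rw [MvPowerSeries.X_pow_eq, MvPowerSeries.monomial_mul_monomial, one_mul]
    rw [hsplit]
    exact mul_congr h₁ h₂ (pow_congr h₁ h₂ (hX a) b) ih

lemma pow_mem (hD : IsDeriv D) {nn : ℕ} (f : R) (hf : f ∈ maximalIdeal R ^ (nn + 1)) :
    D f ∈ maximalIdeal R ^ nn := by
  induction nn generalizing f with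
  | zero => simp [pow_zero, Ideal.one_eq_top]
  | succ nn ih =>
    rw [pow_succ] at hf
    refine Submodule.mul_induction_on hf ?_ ?_
    · intro g hg h hh
      rw [hD.mul]
      apply Ideal.add_mem
      · rw [pow_succ]
        exact Ideal.mul_mem_mul (ih g hg) hh
      · exact Ideal.mul_mem_right _ _ hg
    · intro x y hx hy
      rw [hD.add]
      exact Ideal.add_mem _ hx hy

end IsDeriv

lemma isDeriv_pderiv (ν : Fin s) : IsDeriv (pderiv ν : R → R) :=
  ⟨pderiv_add ν, pderiv_mul ν, pderiv_C ν⟩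

theorem IsDeriv.eq_sum {D : MvPowerSeries (Fin s) K → MvPowerSeries (Fin s) K}
    (hD : IsDeriv D) (f : R) :
    D f = ∑ μ : Fin s, D (MvPowerSeries.X μ) * pderiv μ f := by
  set D' : R → R := fun g => ∑ μ : Fin s, D (MvPowerSeries.X μ) * pderiv μ g with hD'def
  have hD' : IsDeriv D' := by
    constructor
    · intro f g
      simp only [hD'def, pderiv_add, mul_add, Finset.sum_add_distrib]
    · intro f g
      simp only [hD'def]
      rw [Finset.sum_mul, Finset.mul_sum, ← Finset.sum_add_distrib]
      apply Finset.sum_congr rfl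
      intro μ _
      rw [pderiv_mul]
      ring
    · intro c
      simp only [hD'def, pderiv_C, mul_zero, Finset.sum_const_zero]
  have hX : ∀ μ : Fin s, D (MvPowerSeries.X μ) = D' (MvPowerSeries.X μ) := by
    intro μ
    simp only [hD'def]
    rw [Finset.sum_eq_single μ]
    · rw [pderiv_X, if_pos rfl, mul_one]
    · intro b _ hne
      rw [pderiv_X, if_neg (fun hh => hne hh.symm), mul_zero]
    · intro hnm
      exact absurd (Finset.mem_univ μ) hnm
  have key : ∀ nn : ℕ, D f - D' f ∈ maximalIdeal R ^ nn := by
    intro nn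
    have htr : D (truncP (nn + 1) f) = D' (truncP (nn + 1) f) := by
      rw [truncP, hD.sum, hD'.sum]
      apply Finset.sum_congr rfl
      intro e _
      exact IsDeriv.congr_monomial hD hD' hX e _
    have hrm : f - truncP (nn + 1) f ∈ maximalIdeal R ^ (nn + 1) := sub_truncP_mem_pow _ _
    have h1 := hD.pow_mem _ hrm
    have h2 := hD'.pow_mem _ hrm
    have hfr : D f = D (f - truncP (nn + 1) f) + D (truncP (nn + 1) f) := by
      rw [← hD.add, sub_add_cancel]
    have hfr' : D' f = D' (f - truncP (nn + 1) f) + D' (truncP (nn + 1) f) := by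
      rw [← hD'.add, sub_add_cancel]
    have heq : D f - D' f
        = D (f - truncP (nn + 1) f) - D' (f - truncP (nn + 1) f) := by
      rw [hfr, hfr', htr]
      ring
    rw [heq]
    exact Submodule.sub_mem _ h1 h2
  have := eq_zero_of_forall_mem_pow key
  exact sub_eq_zero.1 this

lemma algEquiv_C (φ : R ≃ₐ[K] R) (c : K) :
    φ (@MvPowerSeries.C (Fin s) K _ c) = @MvPowerSeries.C (Fin s) K _ c := by
  rw [MvPowerSeries.c_eq_algebraMap]
  exact φ.commutes c

lemma isDeriv_conj (φ : R ≃ₐ[K] R) (ν : Fin s) :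
    IsDeriv (fun g : R => φ.symm (pderiv ν (φ g))) := by
  constructor
  · intro f g
    rw [map_add, pderiv_add, map_add]
  · intro f g
    rw [map_mul, pderiv_mul, map_add, map_mul, map_mul,
      AlgEquiv.symm_apply_apply, AlgEquiv.symm_apply_apply]
  · intro c
    rw [algEquiv_C, pderiv_C, map_zero]

theorem pderiv_algEquiv (φ : R ≃ₐ[K] R) (ν : Fin s) (f : R) :
    pderiv ν (φ f) = ∑ μ : Fin s,
      pderiv ν (φ (MvPowerSeries.X μ)) * φ (pderiv μ f) := by
  have h := (isDeriv_conj φ ν).eq_sum f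
  have h2 := congrArg φ h
  rw [AlgEquiv.apply_symm_apply, map_sum] at h2
  rw [h2]
  apply Finset.sum_congr rfl
  intro μ _
  rw [map_mul, AlgEquiv.apply_symm_apply]

lemma algEquiv_mem_maximalIdeal (φ : R ≃ₐ[K] R) {f : R} (hf : f ∈ maximalIdeal R) :
    φ f ∈ maximalIdeal R := by
  rw [IsLocalRing.mem_maximalIdeal, mem_nonunits_iff] at hf ⊢
  intro hu
  exact hf (by simpa using hu.map φ.symm)


section Matrices

lemma pderiv_sum {ι : Type*} (ν : Fin s) (t : Finset ι) (F : ι → R) :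
    pderiv ν (∑ i ∈ t, F i) = ∑ i ∈ t, pderiv ν (F i) :=
  (isDeriv_pderiv ν).sum t F

lemma matrix_map_pderiv_mul {a b c : ℕ} (ν : Fin s)
    (X : Matrix (Fin a) (Fin b) R) (Y : Matrix (Fin b) (Fin c) R) :
    (X * Y).map (pderiv ν) = X.map (pderiv ν) * Y + X * Y.map (pderiv ν) := by
  refine Matrix.ext fun i j => ?_
  simp only [Matrix.map_apply, Matrix.mul_apply, Matrix.add_apply]
  rw [pderiv_sum, ← Finset.sum_add_distrib]
  apply Finset.sum_congr rfl
  intro k _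
  rw [pderiv_mul]

lemma matrix_map_mul_algEquiv {a b c : ℕ} (ψ : R ≃ₐ[K] R)
    (X : Matrix (Fin a) (Fin b) R) (Y : Matrix (Fin b) (Fin c) R) :
    (X * Y).map ⇑ψ = X.map ⇑ψ * Y.map ⇑ψ := by
  ext i j
  simp [Matrix.map_apply, Matrix.mul_apply, map_sum, map_mul]

lemma matrix_map_one_algEquiv {a : ℕ} (ψ : R ≃ₐ[K] R) :
    (1 : Matrix (Fin a) (Fin a) R).map ⇑ψ = 1 := by
  ext i j
  simp [Matrix.map_apply, Matrix.one_apply, apply_ite ⇑ψ, map_one, map_zero]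

lemma matrix_map_symm_map {a b : ℕ} (ψ : R ≃ₐ[K] R) (X : Matrix (Fin a) (Fin b) R) :
    (X.map ⇑ψ.symm).map ⇑ψ = X := by
  ext i j
  simp [Matrix.map_apply]

lemma matrix_map_map_symm {a b : ℕ} (ψ : R ≃ₐ[K] R) (X : Matrix (Fin a) (Fin b) R) :
    (X.map ⇑ψ).map ⇑ψ.symm = X := by
  ext i j
  simp [Matrix.map_apply]

lemma matrix_map_algEquiv_pderiv {a b : ℕ} (ψ : R ≃ₐ[K] R) (ν : Fin s)
    (A : Matrix (Fin a) (Fin b) R) :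
    (A.map ⇑ψ).map (pderiv ν)
      = ∑ μ : Fin s, pderiv ν (ψ (MvPowerSeries.X μ)) • ((A.map (pderiv μ)).map ⇑ψ) := by
  refine Matrix.ext fun i j => ?_
  rw [Matrix.map_apply, Matrix.map_apply, pderiv_algEquiv, Matrix.sum_apply]
  apply Finset.sum_congr rfl
  intro μ _
  simp [Matrix.smul_apply, Matrix.map_apply, smul_eq_mul]

instance ringHomSurjective_algEquiv (φ : R ≃ₐ[K] R) :
    RingHomSurjective (φ.toAlgHom.toRingHom : R →+* R) := ⟨φ.surjective⟩

/-- `X ↦ U · φ(X) · V` as a `φ`-semilinear map. -/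
def Phi {a b : ℕ} (U : (Matrix (Fin a) (Fin a) R)ˣ) (V : (Matrix (Fin b) (Fin b) R)ˣ)
    (φ : R ≃ₐ[K] R) :
    Matrix (Fin a) (Fin b) R →ₛₗ[(φ.toAlgHom.toRingHom : R →+* R)] Matrix (Fin a) (Fin b) R where
  toFun X := (U : Matrix (Fin a) (Fin a) R) * X.map ⇑φ * (V : Matrix (Fin b) (Fin b) R)
  map_add' X Y := by
    show (U : Matrix (Fin a) (Fin a) R) * ((X + Y).map ⇑φ) * (V : Matrix (Fin b) (Fin b) R)
      = (U : Matrix (Fin a) (Fin a) R) * X.map ⇑φ * (V : Matrix (Fin b) (Fin b) R)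
        + (U : Matrix (Fin a) (Fin a) R) * Y.map ⇑φ * (V : Matrix (Fin b) (Fin b) R)
    rw [Matrix.map_add ⇑φ (fun x y => map_add φ x y), Matrix.mul_add, Matrix.add_mul]
  map_smul' r X := by
    have h : (r • X).map ⇑φ = φ r • X.map ⇑φ := by
      ext i j
      simp [Matrix.map_apply, Matrix.smul_apply, smul_eq_mul, map_mul]
    show (U : Matrix (Fin a) (Fin a) R) * ((r • X).map ⇑φ) * (V : Matrix (Fin b) (Fin b) R)
      = φ r • ((U : Matrix (Fin a) (Fin a) R) * X.map ⇑φ * (V : Matrix (Fin b) (Fin b) R))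
    rw [h, Matrix.mul_smul, Matrix.smul_mul]

lemma Phi_apply {a b : ℕ} (U : (Matrix (Fin a) (Fin a) R)ˣ) (V : (Matrix (Fin b) (Fin b) R)ˣ)
    (φ : R ≃ₐ[K] R) (X : Matrix (Fin a) (Fin b) R) :
    Phi U V φ X = (U : Matrix (Fin a) (Fin a) R) * X.map ⇑φ * (V : Matrix (Fin b) (Fin b) R) :=
  rfl

/-- Entrywise `ψ` on square matrices, as a unit. -/
def unitMap {a : ℕ} (ψ : R ≃ₐ[K] R) (U : (Matrix (Fin a) (Fin a) R)ˣ) :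
    (Matrix (Fin a) (Fin a) R)ˣ where
  val := (U : Matrix (Fin a) (Fin a) R).map ⇑ψ
  inv := ((U⁻¹ : (Matrix (Fin a) (Fin a) R)ˣ) : Matrix (Fin a) (Fin a) R).map ⇑ψ
  val_inv := by rw [← matrix_map_mul_algEquiv, Units.mul_inv, matrix_map_one_algEquiv]
  inv_val := by rw [← matrix_map_mul_algEquiv, Units.inv_mul, matrix_map_one_algEquiv]

lemma coe_unitMap_inv {a : ℕ} (ψ : R ≃ₐ[K] R) (U : (Matrix (Fin a) (Fin a) R)ˣ) :
    (((unitMap ψ U)⁻¹ : (Matrix (Fin a) (Fin a) R)ˣ) : Matrix (Fin a) (Fin a) R)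
      = ((U⁻¹ : (Matrix (Fin a) (Fin a) R)ˣ) : Matrix (Fin a) (Fin a) R).map ⇑ψ := rfl

lemma cancel_left {a b : ℕ} (U : (Matrix (Fin a) (Fin a) R)ˣ)
    (X : Matrix (Fin a) (Fin a) R) (M : Matrix (Fin a) (Fin b) R) :
    (U : Matrix (Fin a) (Fin a) R) * (((U⁻¹ : (Matrix (Fin a) (Fin a) R)ˣ)
        : Matrix (Fin a) (Fin a) R) * X * M) = X * M := by
  rw [← Matrix.mul_assoc, ← Matrix.mul_assoc, Units.mul_inv, Matrix.one_mul]

lemma cancel_right {a b : ℕ} (V : (Matrix (Fin b) (Fin b) R)ˣ)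
    (X : Matrix (Fin b) (Fin b) R) (M : Matrix (Fin a) (Fin b) R) :
    M * (X * ((V⁻¹ : (Matrix (Fin b) (Fin b) R)ˣ) : Matrix (Fin b) (Fin b) R)) *
      (V : Matrix (Fin b) (Fin b) R) = M * X := by
  rw [Matrix.mul_assoc, Matrix.mul_assoc, Units.inv_mul, Matrix.mul_one]

end Matrices


section Main

variable {mm nn : ℕ}

lemma mul_left_mem_span (A : Matrix (Fin mm) (Fin nn) R) (W : Matrix (Fin mm) (Fin mm) R) :
    W * A ∈ Submodule.span R
      ((Set.range fun pq : Fin mm × Fin mm =>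
          Matrix.single pq.1 pq.2 (1 : R) * A)
        ∪ (Set.range fun hl : Fin nn × Fin nn =>
          A * Matrix.single hl.1 hl.2 (1 : R))) := by
  have hW : W * A = ∑ i : Fin mm, ∑ j : Fin mm,
      W i j • (Matrix.single i j (1 : R) * A) := by
    conv_lhs => rw [Matrix.matrix_eq_sum_single W]
    rw [Matrix.sum_mul]
    apply Finset.sum_congr rfl
    intro i _
    rw [Matrix.sum_mul]
    apply Finset.sum_congr rfl
    intro j _
    rw [show Matrix.single i j (W i j) = W i j • Matrix.single i j (1 : R) by
      rw [Matrix.smul_single, smul_eq_mul, mul_one], Matrix.smul_mul]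
  rw [hW]
  apply Submodule.sum_mem
  intro i _
  apply Submodule.sum_mem
  intro j _
  exact Submodule.smul_mem _ _
    (Submodule.subset_span (Set.mem_union_left _ ⟨(i, j), rfl⟩))

lemma mul_right_mem_span (A : Matrix (Fin mm) (Fin nn) R) (W : Matrix (Fin nn) (Fin nn) R) :
    A * W ∈ Submodule.span R
      ((Set.range fun pq : Fin mm × Fin mm =>
          Matrix.single pq.1 pq.2 (1 : R) * A)
        ∪ (Set.range fun hl : Fin nn × Fin nn =>
          A * Matrix.single hl.1 hl.2 (1 : R))) := by
  have hW : A * W = ∑ i : Fin nn, ∑ j : Fin nn,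
      W i j • (A * Matrix.single i j (1 : R)) := by
    conv_lhs => rw [Matrix.matrix_eq_sum_single W]
    rw [Matrix.mul_sum]
    apply Finset.sum_congr rfl
    intro i _
    rw [Matrix.mul_sum]
    apply Finset.sum_congr rfl
    intro j _
    rw [show Matrix.single i j (W i j) = W i j • Matrix.single i j (1 : R) by
      rw [Matrix.smul_single, smul_eq_mul, mul_one], Matrix.mul_smul]
  rw [hW]
  apply Submodule.sum_mem
  intro i _
  apply Submodule.sum_mem
  intro j _
  exact Submodule.smul_mem _ _
    (Submodule.subset_span (Set.mem_union_right _ ⟨(i, j), rfl⟩))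

lemma mem_map_phi (U : (Matrix (Fin mm) (Fin mm) R)ˣ) (V : (Matrix (Fin nn) (Fin nn) R)ˣ)
    (φ : R ≃ₐ[K] R) {N : Submodule R (Matrix (Fin mm) (Fin nn) R)} (r : R)
    {y : Matrix (Fin mm) (Fin nn) R} (hy : φ.symm r • y ∈ N) :
    r • ((U : Matrix (Fin mm) (Fin mm) R) * y.map ⇑φ * (V : Matrix (Fin nn) (Fin nn) R))
      ∈ Submodule.map (Phi U V φ) N := by
  refine Submodule.mem_map.2 ⟨φ.symm r • y, hy, ?_⟩
  rw [Phi_apply]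
  have h : (φ.symm r • y).map ⇑φ = r • y.map ⇑φ := by
    refine Matrix.ext fun i j => ?_
    simp [Matrix.map_apply, Matrix.smul_apply, smul_eq_mul, map_mul,
      AlgEquiv.apply_symm_apply]
  rw [h, Matrix.mul_smul, Matrix.smul_mul]

theorem main_le (U : (Matrix (Fin mm) (Fin mm) R)ˣ) (V : (Matrix (Fin nn) (Fin nn) R)ˣ)
    (φ : R ≃ₐ[K] R) (A : Matrix (Fin mm) (Fin nn) R) :
    Tlre ((U : Matrix (Fin mm) (Fin mm) R) * A.map ⇑φ * (V : Matrix (Fin nn) (Fin nn) R))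
        ≤ Submodule.map (Phi U V φ) (Tlre A)
      ∧ Tlr ((U : Matrix (Fin mm) (Fin mm) R) * A.map ⇑φ * (V : Matrix (Fin nn) (Fin nn) R))
        ≤ Submodule.map (Phi U V φ) (Tlr A) := by
  set B := (U : Matrix (Fin mm) (Fin mm) R) * A.map ⇑φ * (V : Matrix (Fin nn) (Fin nn) R)
    with hBdef
  have heqL : ∀ pq : Fin mm × Fin mm,
      Matrix.single pq.1 pq.2 (1 : R) * B
        = (U : Matrix (Fin mm) (Fin mm) R)
            * (((((U⁻¹ : (Matrix (Fin mm) (Fin mm) R)ˣ) : Matrix (Fin mm) (Fin mm) R)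
                * (Matrix.single pq.1 pq.2 (1 : R) * (U : Matrix (Fin mm) (Fin mm) R))).map ⇑φ.symm
              * A).map ⇑φ)
            * (V : Matrix (Fin nn) (Fin nn) R) := by
    intro pq
    rw [matrix_map_mul_algEquiv, matrix_map_symm_map, hBdef, cancel_left,
      Matrix.mul_assoc (Matrix.single pq.1 pq.2 (1 : R)) ((U : Matrix (Fin mm) (Fin mm) R)) (A.map ⇑φ),
      Matrix.mul_assoc (Matrix.single pq.1 pq.2 (1 : R)) ((U : Matrix (Fin mm) (Fin mm) R) * A.map ⇑φ) ((V : Matrix (Fin nn) (Fin nn) R))]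
  have heqR : ∀ hl : Fin nn × Fin nn,
      B * Matrix.single hl.1 hl.2 (1 : R)
        = (U : Matrix (Fin mm) (Fin mm) R)
            * ((A * (((V : Matrix (Fin nn) (Fin nn) R) * Matrix.single hl.1 hl.2 (1 : R)
                * ((V⁻¹ : (Matrix (Fin nn) (Fin nn) R)ˣ) : Matrix (Fin nn) (Fin nn) R)).map ⇑φ.symm)).map ⇑φ)
            * (V : Matrix (Fin nn) (Fin nn) R) := by
    intro hl
    rw [matrix_map_mul_algEquiv, matrix_map_symm_map, hBdef,
      ← Matrix.mul_assoc ((U : Matrix (Fin mm) (Fin mm) R)) (A.map ⇑φ) _,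
      cancel_right V ((V : Matrix (Fin nn) (Fin nn) R) * Matrix.single hl.1 hl.2 (1 : R))
        ((U : Matrix (Fin mm) (Fin mm) R) * A.map ⇑φ),
      ← Matrix.mul_assoc]
  have heqT1 : ∀ ν : Fin s,
      ((U : Matrix (Fin mm) (Fin mm) R)).map (pderiv ν) * A.map ⇑φ * (V : Matrix (Fin nn) (Fin nn) R)
        = (U : Matrix (Fin mm) (Fin mm) R)
            * ((((((U⁻¹ : (Matrix (Fin mm) (Fin mm) R)ˣ) : Matrix (Fin mm) (Fin mm) R)
                * ((U : Matrix (Fin mm) (Fin mm) R)).map (pderiv ν)).map ⇑φ.symm) * A).map ⇑φ)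
            * (V : Matrix (Fin nn) (Fin nn) R) := by
    intro ν
    rw [matrix_map_mul_algEquiv, matrix_map_symm_map, cancel_left]
  have heqT3 : ∀ ν : Fin s,
      (U : Matrix (Fin mm) (Fin mm) R) * A.map ⇑φ * ((V : Matrix (Fin nn) (Fin nn) R)).map (pderiv ν)
        = (U : Matrix (Fin mm) (Fin mm) R)
            * ((A * ((((V : Matrix (Fin nn) (Fin nn) R)).map (pderiv ν)
                * ((V⁻¹ : (Matrix (Fin nn) (Fin nn) R)ˣ) : Matrix (Fin nn) (Fin nn) R)).map ⇑φ.symm)).map ⇑φ)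
            * (V : Matrix (Fin nn) (Fin nn) R) := by
    intro ν
    rw [matrix_map_mul_algEquiv, matrix_map_symm_map,
      ← Matrix.mul_assoc ((U : Matrix (Fin mm) (Fin mm) R)) (A.map ⇑φ) _,
      cancel_right V (((V : Matrix (Fin nn) (Fin nn) R)).map (pderiv ν))
        ((U : Matrix (Fin mm) (Fin mm) R) * A.map ⇑φ)]
  have hBd : ∀ ν : Fin s, B.map (pderiv ν)
      = ((U : Matrix (Fin mm) (Fin mm) R)).map (pderiv ν) * A.map ⇑φ * (V : Matrix (Fin nn) (Fin nn) R)
        + (U : Matrix (Fin mm) (Fin mm) R) * ((A.map ⇑φ).map (pderiv ν)) * (V : Matrix (Fin nn) (Fin nn) R)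
        + (U : Matrix (Fin mm) (Fin mm) R) * A.map ⇑φ * ((V : Matrix (Fin nn) (Fin nn) R)).map (pderiv ν) := by
    intro ν
    rw [hBdef, matrix_map_pderiv_mul, matrix_map_pderiv_mul, Matrix.add_mul]
  have hT2 : ∀ ν : Fin s,
      (U : Matrix (Fin mm) (Fin mm) R) * ((A.map ⇑φ).map (pderiv ν)) * (V : Matrix (Fin nn) (Fin nn) R)
        = ∑ μ : Fin s, pderiv ν (φ (MvPowerSeries.X μ)) •
            ((U : Matrix (Fin mm) (Fin mm) R) * (A.map (pderiv μ)).map ⇑φ * (V : Matrix (Fin nn) (Fin nn) R)) := by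
    intro ν
    rw [matrix_map_algEquiv_pderiv, Matrix.mul_sum, Matrix.sum_mul]
    apply Finset.sum_congr rfl
    intro μ _
    rw [Matrix.mul_smul, Matrix.smul_mul]
  constructor
  · unfold Tlre
    apply sup_le
    · rw [Submodule.span_le]
      rintro x (⟨pq, rfl⟩ | ⟨hl, rfl⟩)
      · beta_reduce
        rw [heqL pq]
        exact Submodule.mem_map.2 ⟨_, Submodule.mem_sup_left (mul_left_mem_span A _), rfl⟩
      · beta_reduce
        rw [heqR hl]
        exact Submodule.mem_map.2 ⟨_, Submodule.mem_sup_left (mul_right_mem_span A _), rfl⟩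
    · rw [Submodule.span_le]
      rintro x ⟨ν, rfl⟩
      beta_reduce
      rw [hBd ν, hT2 ν, heqT1 ν, heqT3 ν]
      refine Submodule.add_mem _ (Submodule.add_mem _ ?_ ?_) ?_
      · exact Submodule.mem_map.2 ⟨_, Submodule.mem_sup_left (mul_left_mem_span A _), rfl⟩
      · apply Submodule.sum_mem
        intro μ _
        apply mem_map_phi
        exact Submodule.mem_sup_right
          (Submodule.smul_mem _ _ (Submodule.subset_span ⟨μ, rfl⟩))
      · exact Submodule.mem_map.2 ⟨_, Submodule.mem_sup_left (mul_right_mem_span A _), rfl⟩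
  · unfold Tlr
    apply sup_le
    · rw [Submodule.span_le]
      rintro x (⟨pq, rfl⟩ | ⟨hl, rfl⟩)
      · beta_reduce
        rw [heqL pq]
        exact Submodule.mem_map.2 ⟨_, Submodule.mem_sup_left (mul_left_mem_span A _), rfl⟩
      · beta_reduce
        rw [heqR hl]
        exact Submodule.mem_map.2 ⟨_, Submodule.mem_sup_left (mul_right_mem_span A _), rfl⟩
    · refine Submodule.smul_le.2 fun r hr x hx => ?_
      have hspan : Submodule.span R (Set.range fun ν : Fin s => B.map (pderiv ν))
          ≤ Submodule.comap (LinearMap.lsmul R (Matrix (Fin mm) (Fin nn) R) r)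
              (Submodule.map (Phi U V φ) (Tlr A)) := by
        rw [Submodule.span_le]
        rintro y ⟨ν, rfl⟩
        beta_reduce
        simp only [Set.mem_setOf_eq, SetLike.mem_coe, Submodule.mem_comap,
          LinearMap.lsmul_apply]
        rw [hBd ν, hT2 ν, heqT1 ν, heqT3 ν, smul_add, smul_add]
        have hTlrA : Tlr A = Submodule.span R
            ((Set.range fun pq : Fin mm × Fin mm =>
                Matrix.single pq.1 pq.2 (1 : R) * A)
              ∪ (Set.range fun hl : Fin nn × Fin nn =>
                A * Matrix.single hl.1 hl.2 (1 : R)))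
          ⊔ (maximalIdeal R) •
              Submodule.span R (Set.range fun ν : Fin s => A.map (pderiv ν)) := rfl
        refine Submodule.add_mem _ (Submodule.add_mem _ ?_ ?_) ?_
        · apply mem_map_phi (N := Tlr A)
          rw [hTlrA]
          exact Submodule.mem_sup_left (Submodule.smul_mem _ _ (mul_left_mem_span A _))
        · rw [Finset.smul_sum]
          apply Submodule.sum_mem
          intro μ _
          rw [smul_smul]
          apply mem_map_phi (N := Tlr A)
          rw [hTlrA]
          refine Submodule.mem_sup_right ?_
          exact Submodule.smul_mem_smul
            (algEquiv_mem_maximalIdeal φ.symm (Ideal.mul_mem_right _ _ hr))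
            (Submodule.subset_span ⟨μ, rfl⟩)
        · apply mem_map_phi (N := Tlr A)
          rw [hTlrA]
          exact Submodule.mem_sup_left (Submodule.smul_mem _ _ (mul_right_mem_span A _))
      exact Submodule.mem_comap.1 (hspan hx)

end Main

end TangentAux

theorem tangent_image_transformation {K : Type*} [Field K] {s m n : ℕ}
    (A B : Matrix (Fin m) (Fin n) (MvPowerSeries (Fin s) K))
    (U : (Matrix (Fin m) (Fin m) (MvPowerSeries (Fin s) K))ˣ)
    (V : (Matrix (Fin n) (Fin n) (MvPowerSeries (Fin s) K))ˣ)
    (φ : MvPowerSeries (Fin s) K ≃ₐ[K] MvPowerSeries (Fin s) K)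
    (hB : B = (U : Matrix (Fin m) (Fin m) (MvPowerSeries (Fin s) K)) * (A.map φ) *
      (V : Matrix (Fin n) (Fin n) (MvPowerSeries (Fin s) K))) :
    SetLike.coe (Tlre B) =
      (fun X : Matrix (Fin m) (Fin n) (MvPowerSeries (Fin s) K) =>
        (U : Matrix (Fin m) (Fin m) (MvPowerSeries (Fin s) K)) * (X.map φ) *
          (V : Matrix (Fin n) (Fin n) (MvPowerSeries (Fin s) K))) '' SetLike.coe (Tlre A) ∧
    SetLike.coe (Tlr B) =
      (fun X : Matrix (Fin m) (Fin n) (MvPowerSeries (Fin s) K) =>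
        (U : Matrix (Fin m) (Fin m) (MvPowerSeries (Fin s) K)) * (X.map φ) *
          (V : Matrix (Fin n) (Fin n) (MvPowerSeries (Fin s) K))) '' SetLike.coe (Tlr A) := by
  subst hB
  obtain ⟨h1e, h1⟩ := TangentAux.main_le U V φ A
  set U' := (TangentAux.unitMap φ.symm U)⁻¹ with hU'def
  set V' := (TangentAux.unitMap φ.symm V)⁻¹ with hV'def
  have hA : ((U' : (Matrix (Fin m) (Fin m) (MvPowerSeries (Fin s) K))ˣ)
        : Matrix (Fin m) (Fin m) (MvPowerSeries (Fin s) K))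
      * (((U : Matrix (Fin m) (Fin m) (MvPowerSeries (Fin s) K)) * A.map ⇑φ *
          (V : Matrix (Fin n) (Fin n) (MvPowerSeries (Fin s) K))).map ⇑φ.symm)
      * ((V' : (Matrix (Fin n) (Fin n) (MvPowerSeries (Fin s) K))ˣ)
        : Matrix (Fin n) (Fin n) (MvPowerSeries (Fin s) K)) = A := by
    rw [hU'def, hV'def, TangentAux.coe_unitMap_inv, TangentAux.coe_unitMap_inv,
      TangentAux.matrix_map_mul_algEquiv, TangentAux.matrix_map_mul_algEquiv,
      TangentAux.matrix_map_map_symm]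
    have huu : (((U⁻¹ : (Matrix (Fin m) (Fin m) (MvPowerSeries (Fin s) K))ˣ)
          : Matrix (Fin m) (Fin m) (MvPowerSeries (Fin s) K)).map ⇑φ.symm)
        * (((U : Matrix (Fin m) (Fin m) (MvPowerSeries (Fin s) K))).map ⇑φ.symm) = 1 := by
      rw [← TangentAux.matrix_map_mul_algEquiv, Units.inv_mul,
        TangentAux.matrix_map_one_algEquiv]
    have hvv : (((V : Matrix (Fin n) (Fin n) (MvPowerSeries (Fin s) K))).map ⇑φ.symm)
        * (((V⁻¹ : (Matrix (Fin n) (Fin n) (MvPowerSeries (Fin s) K))ˣ)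
          : Matrix (Fin n) (Fin n) (MvPowerSeries (Fin s) K)).map ⇑φ.symm) = 1 := by
      rw [← TangentAux.matrix_map_mul_algEquiv, Units.mul_inv,
        TangentAux.matrix_map_one_algEquiv]
    rw [← Matrix.mul_assoc, ← Matrix.mul_assoc, huu, Matrix.one_mul, Matrix.mul_assoc,
      hvv, Matrix.mul_one]
  obtain ⟨h2e, h2⟩ := TangentAux.main_le U' V' φ.symm
    ((U : Matrix (Fin m) (Fin m) (MvPowerSeries (Fin s) K)) * A.map ⇑φ *
      (V : Matrix (Fin n) (Fin n) (MvPowerSeries (Fin s) K)))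
  rw [hA] at h2e h2
  have hcomp : ∀ z : Matrix (Fin m) (Fin n) (MvPowerSeries (Fin s) K),
      (U : Matrix (Fin m) (Fin m) (MvPowerSeries (Fin s) K))
        * ((((U' : (Matrix (Fin m) (Fin m) (MvPowerSeries (Fin s) K))ˣ)
            : Matrix (Fin m) (Fin m) (MvPowerSeries (Fin s) K)) * z.map ⇑φ.symm *
            ((V' : (Matrix (Fin n) (Fin n) (MvPowerSeries (Fin s) K))ˣ)
            : Matrix (Fin n) (Fin n) (MvPowerSeries (Fin s) K))).map ⇑φ)
        * (V : Matrix (Fin n) (Fin n) (MvPowerSeries (Fin s) K)) = z := by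
    intro z
    rw [hU'def, hV'def, TangentAux.coe_unitMap_inv, TangentAux.coe_unitMap_inv,
      TangentAux.matrix_map_mul_algEquiv, TangentAux.matrix_map_mul_algEquiv,
      TangentAux.matrix_map_symm_map, TangentAux.matrix_map_symm_map,
      TangentAux.matrix_map_symm_map]
    rw [← Matrix.mul_assoc, ← Matrix.mul_assoc, Units.mul_inv, Matrix.one_mul,
      Matrix.mul_assoc, Units.inv_mul, Matrix.mul_one]
  constructor
  · apply Set.Subset.antisymm
    · intro x hx
      obtain ⟨y, hy, hxy⟩ := Submodule.mem_map.1 (h1e hx)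
      exact ⟨y, hy, hxy⟩
    · rintro x ⟨y, hy, rfl⟩
      obtain ⟨z, hz, hzy⟩ := Submodule.mem_map.1 (h2e hy)
      have hyz : (U : Matrix (Fin m) (Fin m) (MvPowerSeries (Fin s) K)) * y.map ⇑φ *
          (V : Matrix (Fin n) (Fin n) (MvPowerSeries (Fin s) K)) = z := by
        rw [← hzy]
        exact hcomp z
      show (U : Matrix (Fin m) (Fin m) (MvPowerSeries (Fin s) K)) * y.map ⇑φ *
          (V : Matrix (Fin n) (Fin n) (MvPowerSeries (Fin s) K)) ∈
        Tlre ((U : Matrix (Fin m) (Fin m) (MvPowerSeries (Fin s) K)) * A.map ⇑φ *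
          (V : Matrix (Fin n) (Fin n) (MvPowerSeries (Fin s) K)))
      rw [hyz]
      exact hz
  · apply Set.Subset.antisymm
    · intro x hx
      obtain ⟨y, hy, hxy⟩ := Submodule.mem_map.1 (h1 hx)
      exact ⟨y, hy, hxy⟩
    · rintro x ⟨y, hy, rfl⟩
      obtain ⟨z, hz, hzy⟩ := Submodule.mem_map.1 (h2 hy)
      have hyz : (U : Matrix (Fin m) (Fin m) (MvPowerSeries (Fin s) K)) * y.map ⇑φ *
          (V : Matrix (Fin n) (Fin n) (MvPowerSeries (Fin s) K)) = z := by
        rw [← hzy]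
        exact hcomp z
      show (U : Matrix (Fin m) (Fin m) (MvPowerSeries (Fin s) K)) * y.map ⇑φ *
          (V : Matrix (Fin n) (Fin n) (MvPowerSeries (Fin s) K)) ∈
        Tlr ((U : Matrix (Fin m) (Fin m) (MvPowerSeries (Fin s) K)) * A.map ⇑φ *
          (V : Matrix (Fin n) (Fin n) (MvPowerSeries (Fin s) K)))
      rw [hyz]
      exact hz
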